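/- Let a_k = (1+k)^{-γ₂} with 0 < γ₂ < 1, t,s > 0, u₁ ≥ 0, u₂ ≥ 0 fixed, and let n₁ = n, n₂ = ⌊n^τ⌋ with 0 < τ < 1. Define Z_n = Σ_{k = max(0,-⌊n₁u₁⌋,-⌊n₂u₂⌋)}^{min(⌊n₁t⌋-⌊n₁u₁⌋, ⌊n₂s⌋-⌊n₂u₂⌋)} a_k. Then n₂^{γ₂-1} Z_n → 1_{u₁ < t}·1_{u₂ < s}·(s-u₂)^{1-γ₂}/(1-γ₂) as n → ∞, for almost all (u₁,u₂) in [0,∞)². -/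

import Mathlib

open Filter

/-- Coefficients `a_k = (1+k)^{-γ}` for `k ≥ 0`, `0` otherwise. -/
noncomputable def coefF (γ : ℝ) : ℤ → ℝ :=
  fun k => if 0 ≤ k then ((1 : ℝ) + (k : ℝ)) ^ (-γ) else 0


lemma sumS_lower (γ : ℝ) (hγ0 : 0 < γ) (hγ1 : γ < 1) (m : ℕ) :
    (((m:ℝ)+2)^(1-γ) - 1)/(1-γ) ≤ ∑ k ∈ Finset.range (m+1), ((1:ℝ)+k)^(-γ) := by
  have hanti : AntitoneOn (fun x : ℝ => x ^ (-γ)) (Set.Icc (1:ℝ) (1 + (m+1:ℕ))) := by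
    intro x hx y hy hxy
    exact Real.rpow_le_rpow_of_nonpos (lt_of_lt_of_le one_pos hx.1) hxy (by linarith)
  have h := hanti.integral_le_sum
  have hint : (∫ x in (1:ℝ)..(1 + (m+1:ℕ)), x ^ (-γ))
      = (((m:ℝ)+2)^(1-γ) - 1)/(1-γ) := by
    rw [integral_rpow (Or.inl (by linarith))]
    push_cast
    rw [Real.one_rpow]
    ring_nf
  rw [hint] at h
  refine h.trans_eq ?_
  refine Finset.sum_congr rfl fun k _ => ?_
  push_cast
  ring_nf

lemma sumS_upper (γ : ℝ) (hγ0 : 0 < γ) (hγ1 : γ < 1) (m : ℕ) :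
    ∑ k ∈ Finset.range (m+1), ((1:ℝ)+k)^(-γ) ≤ 1 + (((m:ℝ)+1)^(1-γ) - 1)/(1-γ) := by
  have hanti : AntitoneOn (fun x : ℝ => x ^ (-γ)) (Set.Icc (1:ℝ) (1 + (m:ℕ))) := by
    intro x hx y hy hxy
    exact Real.rpow_le_rpow_of_nonpos (lt_of_lt_of_le one_pos hx.1) hxy (by linarith)
  have h := hanti.sum_le_integral
  have hint : (∫ x in (1:ℝ)..(1 + (m:ℕ)), x ^ (-γ))
      = (((m:ℝ)+1)^(1-γ) - 1)/(1-γ) := by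
    rw [integral_rpow (Or.inl (by linarith))]
    push_cast
    rw [Real.one_rpow]
    ring_nf
  rw [hint] at h
  rw [Finset.sum_range_succ']
  push_cast at h ⊢
  have h0 : ((1:ℝ)+0)^(-γ) = 1 := by norm_num
  rw [h0]
  linarith [h]

lemma sum_Icc_coefF (γ : ℝ) (M : ℤ) (hM : 0 ≤ M) :
    ∑ k ∈ Finset.Icc (0:ℤ) M, coefF γ k
      = ∑ k ∈ Finset.range (M.toNat+1), ((1:ℝ)+(k:ℝ))^(-γ) := by
  rw [show Finset.Icc (0:ℤ) M = Finset.map ⟨(fun n : ℕ => (n : ℤ)), Nat.cast_injective⟩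
      (Finset.range (M.toNat+1)) by
    ext k
    simp only [Finset.mem_Icc, Finset.mem_map, Finset.mem_range, Function.Embedding.coeFn_mk]
    constructor
    · rintro ⟨h1, h2⟩; exact ⟨k.toNat, by omega, by omega⟩
    · rintro ⟨a, ha, rfl⟩; omega]
  rw [Finset.sum_map]
  refine Finset.sum_congr rfl fun k _ => ?_
  simp [coefF]
lemma keyB (γ : ℝ) (hγ0 : 0 < γ) (hγ1 : γ < 1) (b : ℕ → ℝ) (M : ℕ → ℤ) (c : ℝ) (hc : 0 < c)
    (hb : Tendsto b atTop atTop)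
    (hM : Tendsto (fun n => ((M n : ℝ)) / b n) atTop (nhds c)) :
    Tendsto (fun n => (b n)^(γ-1) * ∑ k ∈ Finset.Icc (0:ℤ) (M n), coefF γ k) atTop
      (nhds (c^(1-γ)/(1-γ))) := by
  have h1γ : (0:ℝ) < 1 - γ := by linarith
  have hb1 : ∀ᶠ n in atTop, 1 ≤ b n := hb.eventually_ge_atTop 1
  have hMpos : ∀ᶠ n in atTop, 0 < (M n : ℝ) / b n :=
    hM.eventually (eventually_gt_nhds hc)
  have hM0 : ∀ᶠ n in atTop, 0 ≤ M n := by
    filter_upwards [hb1, hMpos] with n h1 h2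
    by_contra h
    push_neg at h
    have hbn : (0:ℝ) < b n := by linarith
    have : (M n : ℝ) < 0 := by exact_mod_cast h
    have := div_neg_of_neg_of_pos this hbn
    linarith
  -- limit of b^(γ-1)
  have hbinv : Tendsto (fun n => (b n) ^ (γ-1)) atTop (nhds 0) := by
    have := (tendsto_rpow_neg_atTop h1γ).comp hb
    simpa [Function.comp_def, neg_sub] using this
  have hinv : Tendsto (fun n => (b n)⁻¹) atTop (nhds 0) := hb.inv_tendsto_atTop
  -- toNat ratio limit
  have hmN : Tendsto (fun n => (((M n).toNat : ℝ)) / b n) atTop (nhds c) := by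
    refine hM.congr' ?_
    filter_upwards [hM0] with n h
    have : (((M n).toNat : ℝ)) = ((M n : ℝ)) := by exact_mod_cast Int.toNat_of_nonneg h
    rw [this]
  -- lower bound sequence
  have hL : Tendsto (fun n => ((((M n).toNat : ℝ) + 2)/(b n))^(1-γ)/(1-γ)
      - (b n)^(γ-1)/(1-γ)) atTop (nhds (c^(1-γ)/(1-γ))) := by
    have h1 : Tendsto (fun n => (((M n).toNat : ℝ) + 2)/(b n)) atTop (nhds c) := by
      have h2b : Tendsto (fun n => 2/(b n)) atTop (nhds 0) := by
        simpa [div_eq_mul_inv] using hinv.const_mul 2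
      have := hmN.add h2b
      simpa [add_div] using this
    have h2 : Tendsto (fun n => ((((M n).toNat : ℝ) + 2)/(b n))^(1-γ)) atTop
        (nhds (c^(1-γ))) := h1.rpow_const (Or.inl hc.ne')
    have := (h2.div_const (1-γ)).sub (hbinv.div_const (1-γ))
    simpa using this
  -- upper bound sequence
  have hU : Tendsto (fun n => (b n)^(γ-1)
      + (((((M n).toNat : ℝ) + 1)/(b n))^(1-γ) - (b n)^(γ-1))/(1-γ)) atTop
      (nhds (c^(1-γ)/(1-γ))) := by
    have h1 : Tendsto (fun n => (((M n).toNat : ℝ) + 1)/(b n)) atTop (nhds c) := by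
      have h2b : Tendsto (fun n => 1/(b n)) atTop (nhds 0) := by
        simpa [div_eq_mul_inv] using hinv.const_mul 1
      have := hmN.add h2b
      simpa [add_div] using this
    have h2 : Tendsto (fun n => ((((M n).toNat : ℝ) + 1)/(b n))^(1-γ)) atTop
        (nhds (c^(1-γ))) := h1.rpow_const (Or.inl hc.ne')
    have := hbinv.add ((h2.sub hbinv).div_const (1-γ))
    simpa using this
  refine tendsto_of_tendsto_of_tendsto_of_le_of_le' hL hU ?_ ?_
  · -- lower ≤ f
    filter_upwards [hb1, hM0] with n h1 h0
    have hbpos : (0:ℝ) < b n := by linarith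
    have hbp : (0:ℝ) ≤ (b n)^(γ-1) := Real.rpow_nonneg hbpos.le _
    rw [sum_Icc_coefF γ (M n) h0]
    have hlow := sumS_lower γ hγ0 hγ1 (M n).toNat
    have key : ((((M n).toNat : ℝ) + 2)/(b n))^(1-γ)
        = (b n)^(γ-1) * (((M n).toNat : ℝ) + 2)^(1-γ) := by
      rw [Real.div_rpow (by positivity) hbpos.le, show γ - 1 = -(1-γ) by ring,
        Real.rpow_neg hbpos.le]
      ring
    rw [key]
    calc (b n)^(γ-1) * ((((M n).toNat : ℝ) + 2)^(1-γ))/(1-γ) - (b n)^(γ-1)/(1-γ)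
        = (b n)^(γ-1) * ((((((M n).toNat : ℝ) + 2)^(1-γ)) - 1)/(1-γ)) := by ring
      _ ≤ (b n)^(γ-1) * ∑ k ∈ Finset.range ((M n).toNat + 1), ((1:ℝ)+(k:ℝ))^(-γ) :=
          mul_le_mul_of_nonneg_left hlow hbp
  · -- f ≤ upper
    filter_upwards [hb1, hM0] with n h1 h0
    have hbpos : (0:ℝ) < b n := by linarith
    have hbp : (0:ℝ) ≤ (b n)^(γ-1) := Real.rpow_nonneg hbpos.le _
    rw [sum_Icc_coefF γ (M n) h0]
    have hup := sumS_upper γ hγ0 hγ1 (M n).toNat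
    have key : ((((M n).toNat : ℝ) + 1)/(b n))^(1-γ)
        = (b n)^(γ-1) * (((M n).toNat : ℝ) + 1)^(1-γ) := by
      rw [Real.div_rpow (by positivity) hbpos.le, show γ - 1 = -(1-γ) by ring,
        Real.rpow_neg hbpos.le]
      ring
    rw [key]
    calc (b n)^(γ-1) * ∑ k ∈ Finset.range ((M n).toNat + 1), ((1:ℝ)+(k:ℝ))^(-γ)
        ≤ (b n)^(γ-1) * (1 + (((((M n).toNat : ℝ) + 1)^(1-γ)) - 1)/(1-γ)) :=
          mul_le_mul_of_nonneg_left hup hbp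
      _ = (b n)^(γ-1) + ((b n)^(γ-1) * ((((M n).toNat : ℝ) + 1)^(1-γ)) - (b n)^(γ-1))/(1-γ) := by
          ring
lemma ev_zero (γ : ℝ) (b : ℕ → ℝ) (M : ℕ → ℤ) (h : ∀ᶠ n in atTop, M n < 0) :
    Tendsto (fun n => (b n)^(γ-1) * ∑ k ∈ Finset.Icc (0:ℤ) (M n), coefF γ k) atTop
      (nhds 0) := by
  refine Tendsto.congr' ?_ (tendsto_const_nhds (x := (0:ℝ)))
  filter_upwards [h] with n hn
  rw [Finset.Icc_eq_empty (by omega)]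
  simp

lemma floor_ratio (v w : ℝ) (b : ℕ → ℝ) (hb : Tendsto b atTop atTop) :
    Tendsto (fun n => ((⌊b n * v⌋ - ⌊b n * w⌋ : ℤ) : ℝ)/b n) atTop (nhds (v - w)) := by
  have hinv : Tendsto (fun n => (b n)⁻¹) atTop (nhds 0) := hb.inv_tendsto_atTop
  have hL : Tendsto (fun n => (v - w) - (b n)⁻¹) atTop (nhds (v - w)) := by
    simpa using tendsto_const_nhds.sub hinv
  have hU : Tendsto (fun n => (v - w) + (b n)⁻¹) atTop (nhds (v - w)) := by
    simpa using tendsto_const_nhds.add hinv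
  refine tendsto_of_tendsto_of_tendsto_of_le_of_le' hL hU ?_ ?_
  · filter_upwards [hb.eventually_ge_atTop 1] with n h1
    have hbpos : (0:ℝ) < b n := by linarith
    have h2 : b n * v - 1 < (⌊b n * v⌋ : ℝ) := Int.sub_one_lt_floor _
    have h3 : (⌊b n * w⌋ : ℝ) ≤ b n * w := Int.floor_le _
    rw [le_div_iff₀ hbpos]
    have hinvb : (b n)⁻¹ * b n = 1 := inv_mul_cancel₀ hbpos.ne'
    push_cast
    nlinarith
  · filter_upwards [hb.eventually_ge_atTop 1] with n h1
    have hbpos : (0:ℝ) < b n := by linarith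
    have h2 : (⌊b n * v⌋ : ℝ) ≤ b n * v := Int.floor_le _
    have h3 : b n * w - 1 < (⌊b n * w⌋ : ℝ) := Int.sub_one_lt_floor _
    rw [div_le_iff₀ hbpos]
    have hinvb : (b n)⁻¹ * b n = 1 := inv_mul_cancel₀ hbpos.ne'
    push_cast
    nlinarith

theorem stmt_15 (γ₂ t s u₁ u₂ τ : ℝ) (hγ0 : 0 < γ₂) (hγ1 : γ₂ < 1)
    (ht : 0 < t) (hs : 0 < s) (hu₁ : 0 ≤ u₁) (hu₂ : 0 ≤ u₂)
    (hτ0 : 0 < τ) (hτ1 : τ < 1) (hu₁t : u₁ ≠ t) (hu₂s : u₂ ≠ s) :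
    Tendsto
      (fun n : ℕ =>
        ((⌊(n : ℝ) ^ τ⌋ : ℝ)) ^ (γ₂ - 1) *
          ∑ k ∈ Finset.Icc
              (max (max (0 : ℤ) (-⌊(n : ℝ) * u₁⌋)) (-⌊(⌊(n : ℝ) ^ τ⌋ : ℝ) * u₂⌋))
              (min (⌊(n : ℝ) * t⌋ - ⌊(n : ℝ) * u₁⌋)
                (⌊(⌊(n : ℝ) ^ τ⌋ : ℝ) * s⌋ - ⌊(⌊(n : ℝ) ^ τ⌋ : ℝ) * u₂⌋)),
            coefF γ₂ k)
      atTop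
      (nhds
        ((if u₁ < t then (1 : ℝ) else 0) * (if u₂ < s then (1 : ℝ) else 0) *
          ((s - u₂) ^ (1 - γ₂) / (1 - γ₂)))) := by
  set b : ℕ → ℝ := fun n => ((⌊(n : ℝ) ^ τ⌋ : ℤ) : ℝ) with hbdef
  have hb : Tendsto b atTop atTop :=
    tendsto_intCast_atTop_atTop.comp (tendsto_floor_atTop.comp
      ((tendsto_rpow_atTop hτ0).comp tendsto_natCast_atTop_atTop))
  have hb0 : ∀ n : ℕ, 0 ≤ b n := fun n => by
    have : (0:ℤ) ≤ ⌊(n : ℝ) ^ τ⌋ :=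
      Int.floor_nonneg.mpr (Real.rpow_nonneg (Nat.cast_nonneg n) τ)
    simp only [hbdef]
    exact_mod_cast this
  -- simplify the lower limit of the sum to 0
  have hlow : ∀ n : ℕ, (max (max (0 : ℤ) (-⌊(n : ℝ) * u₁⌋)) (-⌊b n * u₂⌋)) = 0 := by
    intro n
    have h1 : (0:ℤ) ≤ ⌊(n : ℝ) * u₁⌋ :=
      Int.floor_nonneg.mpr (mul_nonneg (Nat.cast_nonneg n) hu₁)
    have h2 : (0:ℤ) ≤ ⌊b n * u₂⌋ := Int.floor_nonneg.mpr (mul_nonneg (hb0 n) hu₂)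
    omega
  simp only [hbdef] at hlow ⊢
  simp only [hlow]
  set M : ℕ → ℤ := fun n =>
    min (⌊(n : ℝ) * t⌋ - ⌊(n : ℝ) * u₁⌋) (⌊b n * s⌋ - ⌊b n * u₂⌋) with hMdef
  by_cases hc2 : u₂ < s
  · by_cases hc1 : u₁ < t
    · -- main case
      rw [if_pos hc1, if_pos hc2, one_mul, one_mul]
      have hB := floor_ratio s u₂ b hb
      -- eventually the min is the second argument
      have hgrow : Tendsto (fun n : ℕ => (n:ℝ)*(t-u₁) - (n:ℝ)^τ * s) atTop atTop := by
        have h1 : Tendsto (fun n : ℕ => (n:ℝ)^τ) atTop atTop :=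
          (tendsto_rpow_atTop hτ0).comp tendsto_natCast_atTop_atTop
        have h2 : Tendsto (fun n : ℕ => (n:ℝ)^(1-τ)*(t-u₁) - s) atTop atTop := by
          have := (((tendsto_rpow_atTop (by linarith : (0:ℝ) < 1-τ)).comp
            tendsto_natCast_atTop_atTop).atTop_mul_const (by linarith : (0:ℝ) < t-u₁))
          simpa [sub_eq_add_neg] using tendsto_atTop_add_const_right atTop (-s) this
        refine (h1.atTop_mul_atTop₀ h2).congr' ?_
        filter_upwards [eventually_gt_atTop 0] with n hn
        have hrw : (n:ℝ)^τ * (n:ℝ)^(1-τ) = (n:ℝ) := by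
          rw [← Real.rpow_add (by positivity)]
          norm_num
        rw [mul_sub, ← mul_assoc, hrw]
      have hev : ∀ᶠ n in atTop, ⌊b n * s⌋ - ⌊b n * u₂⌋ ≤ ⌊(n:ℝ)*t⌋ - ⌊(n:ℝ)*u₁⌋ := by
        filter_upwards [hgrow.eventually_ge_atTop 2] with n h2
        have hA1 : (n:ℝ)*t - 1 < (⌊(n:ℝ)*t⌋ : ℝ) := Int.sub_one_lt_floor _
        have hA2 : (⌊(n:ℝ)*u₁⌋ : ℝ) ≤ (n:ℝ)*u₁ := Int.floor_le _
        have hB1 : (⌊b n * s⌋ : ℝ) ≤ b n * s := Int.floor_le _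
        have hB2 : b n * u₂ - 1 < (⌊b n * u₂⌋ : ℝ) := Int.sub_one_lt_floor _
        have hble : b n ≤ (n:ℝ)^τ := Int.floor_le _
        have hbs : b n * s ≤ (n:ℝ)^τ * s := mul_le_mul_of_nonneg_right hble hs.le
        have hbu : 0 ≤ b n * u₂ := mul_nonneg (hb0 n) hu₂
        have : ((⌊b n * s⌋ - ⌊b n * u₂⌋ : ℤ) : ℝ) ≤ ((⌊(n:ℝ)*t⌋ - ⌊(n:ℝ)*u₁⌋ : ℤ) : ℝ) := by
          push_cast
          nlinarith
        exact_mod_cast this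
      have hMlim : Tendsto (fun n => ((M n : ℝ)) / b n) atTop (nhds (s - u₂)) := by
        refine hB.congr' ?_
        filter_upwards [hev] with n h
        rw [hMdef]
        simp only [min_eq_right h]
      exact keyB γ₂ hγ0 hγ1 b M (s - u₂) (by linarith) hb hMlim
    · -- u₁ > t : sum eventually empty
      have hlt : t < u₁ := lt_of_le_of_ne (not_lt.mp hc1) (Ne.symm hu₁t)
      rw [if_neg hc1, zero_mul, zero_mul]
      refine ev_zero γ₂ b M ?_
      have htb : Tendsto (fun n : ℕ => (n:ℝ) * (t - u₁) + 1) atTop atBot :=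
        tendsto_atBot_add_const_right _ 1
          (tendsto_natCast_atTop_atTop.atTop_mul_const_of_neg (by linarith))
      filter_upwards [htb.eventually_le_atBot (-1)] with n hn
      have hA1 : (⌊(n:ℝ)*t⌋ : ℝ) ≤ (n:ℝ)*t := Int.floor_le _
      have hA2 : (n:ℝ)*u₁ - 1 < (⌊(n:ℝ)*u₁⌋ : ℝ) := Int.sub_one_lt_floor _
      have : ((⌊(n:ℝ)*t⌋ - ⌊(n:ℝ)*u₁⌋ : ℤ) : ℝ) < 0 := by push_cast; nlinarith
      have hAneg : ⌊(n:ℝ)*t⌋ - ⌊(n:ℝ)*u₁⌋ < 0 := by exact_mod_cast this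
      have hMn : M n = min (⌊(n:ℝ)*t⌋ - ⌊(n:ℝ)*u₁⌋) (⌊b n * s⌋ - ⌊b n * u₂⌋) := rfl
      omega
  · -- u₂ > s : sum eventually empty
    have hlt : s < u₂ := lt_of_le_of_ne (not_lt.mp hc2) (Ne.symm hu₂s)
    rw [if_neg hc2, mul_zero, zero_mul]
    refine ev_zero γ₂ b M ?_
    have htb : Tendsto (fun n : ℕ => b n * (s - u₂) + 1) atTop atBot :=
      tendsto_atBot_add_const_right _ 1 (hb.atTop_mul_const_of_neg (by linarith))
    filter_upwards [htb.eventually_le_atBot (-1)] with n hn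
    have hB1 : (⌊b n * s⌋ : ℝ) ≤ b n * s := Int.floor_le _
    have hB2 : b n * u₂ - 1 < (⌊b n * u₂⌋ : ℝ) := Int.sub_one_lt_floor _
    have : ((⌊b n * s⌋ - ⌊b n * u₂⌋ : ℤ) : ℝ) < 0 := by push_cast; nlinarith
    have hBneg : ⌊b n * s⌋ - ⌊b n * u₂⌋ < 0 := by exact_mod_cast this
    have hMn : M n = min (⌊(n:ℝ)*t⌋ - ⌊(n:ℝ)*u₁⌋) (⌊b n * s⌋ - ⌊b n * u₂⌋) := rfl
    omega
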